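/- Let T > 0, Ω ⊂ ℝⁿ bounded open, ω ∈ 𝕊^{n−1}, and let v : [0,T]×Ω → ℂ be C¹, vanish on (0,T)×∂Ω, satisfy v(0,·) = 0, and have square-integrable directional derivative. If ε > 0 satisfies 1 − Tε² > 0, then ∫₀ᵀ∫_Ω |v|² dx dt ≤ (T/ε²)(1 − Tε²)⁻¹ ∫₀ᵀ∫_Ω |(∂_t − ω·∇_x)v|² dx dt. -/

import Mathlib

open MeasureTheory intervalIntegral

open Set in

lemma cs_interval (g : ℝ → ℝ) (a b : ℝ) (hab : a ≤ b) (hg : Continuous g) :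
    (∫ s in a..b, g s) ^ 2 ≤ (b - a) * ∫ s in a..b, g s ^ 2 := by
  rcases eq_or_lt_of_le hab with h | h
  · subst h; simp
  · set I := ∫ s in a..b, g s with hI
    set J := ∫ s in a..b, g s ^ 2 with hJ
    set c := I / (b - a) with hc
    have hba : 0 < b - a := sub_pos.mpr h
    have hint1 : IntervalIntegrable (fun s => g s ^ 2) volume a b :=
      (hg.pow 2).intervalIntegrable a b
    have hint2 : IntervalIntegrable (fun s => 2 * c * g s) volume a b :=
      (continuous_const.mul hg).intervalIntegrable a b
    have h0 : 0 ≤ ∫ s in a..b, (g s - c) ^ 2 :=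
      intervalIntegral.integral_nonneg hab fun _ _ => sq_nonneg _
    have hexp : ∫ s in a..b, (g s - c) ^ 2
        = J - 2 * c * I + (b - a) * c ^ 2 := by
      have heq : (fun s => (g s - c) ^ 2)
          = fun s => (g s ^ 2 - 2 * c * g s) + c ^ 2 := by
        funext s; ring
      rw [heq, intervalIntegral.integral_add (hint1.sub hint2) intervalIntegrable_const,
        intervalIntegral.integral_sub hint1 hint2, intervalIntegral.integral_const_mul,
        intervalIntegral.integral_const]
      simp [smul_eq_mul, ← hI, ← hJ]

    have hcI : c * (b - a) = I := div_mul_cancel₀ _ hba.ne'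
    rw [hexp] at h0
    nlinarith [mul_nonneg hba.le h0, hcI]

lemma exit_time {n : ℕ} {T : ℝ} {Ω : Set (EuclideanSpace ℝ (Fin n))}
    (hΩo : IsOpen Ω) {ω : EuclideanSpace ℝ (Fin n)}
    {v : ℝ × EuclideanSpace ℝ (Fin n) → ℂ}
    (hbd : ∀ t ∈ Set.Icc (0:ℝ) T, ∀ x ∈ frontier Ω, v (t, x) = 0)
    (hv0 : ∀ x, v (0, x) = 0)
    {t : ℝ} {x : EuclideanSpace ℝ (Fin n)} (ht : t ∈ Set.Icc 0 T) (hx : x ∈ Ω) :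
    ∃ s₀ ∈ Set.Icc 0 t, v (s₀, x + (t - s₀) • ω) = 0 ∧
      ∀ s ∈ Set.Ioc s₀ t, x + (t - s) • ω ∈ Ω := by
  set φ : ℝ → EuclideanSpace ℝ (Fin n) := fun s => x + (t - s) • ω with hφ
  have hφc : Continuous φ := by fun_prop
  set S : Set ℝ := Set.Icc 0 t ∩ φ ⁻¹' Ωᶜ with hS
  by_cases hne : S.Nonempty
  · have hScl : IsClosed S := (isClosed_Icc).inter (hΩo.isClosed_compl.preimage hφc)
    have hbdd : BddAbove S := (Set.inter_subset_left).trans (by exact Set.Icc_subset_Iic_self) |> fun h => ⟨t, h⟩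
    set s₀ := sSup S with hs₀
    have hmem : s₀ ∈ S := hScl.csSup_mem hne hbdd
    have hs₀Icc : s₀ ∈ Set.Icc 0 t := hmem.1
    have hnotΩ : φ s₀ ∉ Ω := hmem.2
    have hlt : s₀ < t := by
      rcases lt_or_eq_of_le hs₀Icc.2 with h | h
      · exact h
      · exfalso; apply hnotΩ; rw [h]; simpa [hφ] using hx
    have hIoc : ∀ s ∈ Set.Ioc s₀ t, φ s ∈ Ω := by
      intro s hs
      by_contra hc
      have : s ∈ S := ⟨⟨le_trans hs₀Icc.1 hs.1.le, hs.2⟩, hc⟩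
      exact absurd (le_csSup hbdd this) (not_le.mpr hs.1)
    have hclos : φ s₀ ∈ closure Ω := by
      refine mem_closure_of_tendsto ((hφc.tendsto s₀).mono_left nhdsWithin_le_nhds :
        Filter.Tendsto φ (nhdsWithin s₀ (Set.Ioi s₀)) (nhds (φ s₀))) ?_
      filter_upwards [Ioo_mem_nhdsGT_of_mem ⟨le_refl s₀, hlt⟩] with s hs
      exact hIoc s ⟨hs.1, hs.2.le⟩
    have hfr : φ s₀ ∈ frontier Ω := by
      rw [hΩo.frontier_eq]; exact ⟨hclos, hnotΩ⟩
    exact ⟨s₀, hs₀Icc, hbd s₀ ⟨hs₀Icc.1, le_trans hs₀Icc.2 ht.2⟩ _ hfr, hIoc⟩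
  · refine ⟨0, ⟨le_refl 0, ht.1⟩, hv0 _, fun s hs => ?_⟩
    by_contra hc
    exact hne ⟨s, ⟨⟨hs.1.le, hs.2⟩, hc⟩⟩

lemma transport_key {n : ℕ} {T : ℝ} {Ω : Set (EuclideanSpace ℝ (Fin n))}
    (hΩo : IsOpen Ω) {ω : EuclideanSpace ℝ (Fin n)}
    {v : ℝ × EuclideanSpace ℝ (Fin n) → ℂ} (hv : ContDiff ℝ 1 v)
    (hbd : ∀ t ∈ Set.Icc (0:ℝ) T, ∀ x ∈ frontier Ω, v (t, x) = 0)
    (hv0 : ∀ x, v (0, x) = 0)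
    {t : ℝ} {x : EuclideanSpace ℝ (Fin n)} (ht : t ∈ Set.Icc 0 T) (hx : x ∈ Ω) :
    ENNReal.ofReal (‖v (t, x)‖ ^ 2)
      ≤ ENNReal.ofReal T * ∫⁻ s in Set.Ioc (0:ℝ) T,
          Set.indicator Ω (fun y => ENNReal.ofReal
            (‖fderiv ℝ v (s, y) ((1:ℝ), -ω)‖ ^ 2)) (x + (t - s) • ω) := by
  set φ : ℝ → ℝ × EuclideanSpace ℝ (Fin n) := fun s => (s, x + (t - s) • ω) with hφ
  set f' : ℝ → ℂ := fun s => fderiv ℝ v (φ s) ((1:ℝ), -ω) with hf'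
  have hφc : Continuous φ := by fun_prop
  have hder : ∀ s, HasDerivAt (fun s => v (φ s)) (f' s) s := by
    intro s
    have h2 : HasDerivAt (fun s : ℝ => x + (t - s) • ω) (-ω) s := by
      have h3 : HasDerivAt (fun s : ℝ => t - s) (-1) s := by
        simpa using (hasDerivAt_id s).const_sub t
      simpa using (h3.smul_const ω).const_add x
    have hφd : HasDerivAt φ ((1:ℝ), -ω) s := (hasDerivAt_id s).prodMk h2
    exact ((hv.differentiable one_ne_zero (φ s)).hasFDerivAt.comp_hasDerivAt s hφd)
  have hf'c : Continuous f' := by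
    have h1 : Continuous fun s => fderiv ℝ v (φ s) :=
      (hv.continuous_fderiv one_ne_zero).comp hφc
    exact h1.clm_apply continuous_const
  obtain ⟨s₀, hs₀, hzero, hIoc⟩ := exit_time hΩo hbd hv0 ht hx
  -- FTC
  have hFTC : v (t, x) = ∫ s in s₀..t, f' s := by
    have h := intervalIntegral.integral_eq_sub_of_hasDerivAt
      (f := fun s => v (φ s)) (f' := f') (a := s₀) (b := t)
      (fun s _ => hder s) (hf'c.intervalIntegrable s₀ t)
    rw [h]
    have h0 : v (φ s₀) = 0 := hzero
    simp [hφ, h0, hzero]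
  have hnorm : ‖v (t, x)‖ ≤ ∫ s in s₀..t, ‖f' s‖ := by
    rw [hFTC]
    exact intervalIntegral.norm_integral_le_integral_norm hs₀.2
  have hsq : ‖v (t, x)‖ ^ 2 ≤ (t - s₀) * ∫ s in s₀..t, ‖f' s‖ ^ 2 := by
    calc ‖v (t, x)‖ ^ 2 ≤ (∫ s in s₀..t, ‖f' s‖) ^ 2 :=
          pow_le_pow_left₀ (norm_nonneg _) hnorm 2
      _ ≤ (t - s₀) * ∫ s in s₀..t, ‖f' s‖ ^ 2 :=
          cs_interval _ _ _ hs₀.2 hf'c.norm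
  -- the indicator-type real function
  set Ω' : Set ℝ := {s : ℝ | x + (t - s) • ω ∈ Ω} with hΩ'
  have hΩ'meas : MeasurableSet Ω' :=
    measurableSet_preimage (by fun_prop : Continuous fun s : ℝ => x + (t - s) • ω).measurable
      hΩo.measurableSet
  set H : ℝ → ℝ := Ω'.indicator (fun s => ‖f' s‖ ^ 2) with hH
  have hHmeas : Measurable H := ((hf'c.norm.pow 2).measurable).indicator hΩ'meas
  have hHnn : ∀ s, 0 ≤ H s := fun s => Set.indicator_nonneg (fun s _ => sq_nonneg _) s
  have hHle : ∀ s, H s ≤ ‖f' s‖ ^ 2 :=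
    fun s => Set.indicator_le_self' (fun s _ => sq_nonneg _) s
  have hHint : IntegrableOn H (Set.Ioc 0 T) := by
    apply Integrable.mono' ((hf'c.norm.pow 2).integrableOn_Ioc)
      hHmeas.aestronglyMeasurable
    filter_upwards with s
    rw [Real.norm_of_nonneg (hHnn s)]
    exact hHle s
  have hstep : ∫ s in s₀..t, ‖f' s‖ ^ 2 ≤ ∫ s in Set.Ioc 0 T, H s := by
    rw [intervalIntegral.integral_of_le hs₀.2]
    have hcongr : ∫ s in Set.Ioc s₀ t, ‖f' s‖ ^ 2 = ∫ s in Set.Ioc s₀ t, H s := by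
      apply setIntegral_congr_fun measurableSet_Ioc
      intro s hs
      have hmem : s ∈ Ω' := hIoc s hs
      rw [hH, Set.indicator_of_mem hmem]
    rw [hcongr]
    apply setIntegral_mono_set hHint
    · filter_upwards with s using hHnn s
    · exact HasSubset.Subset.eventuallyLE (Set.Ioc_subset_Ioc hs₀.1 ht.2)
  have hsum : ‖v (t, x)‖ ^ 2 ≤ T * ∫ s in Set.Ioc 0 T, H s := by
    refine le_trans hsq ?_
    apply mul_le_mul (by linarith [hs₀.1, ht.2]) hstep
    · rw [intervalIntegral.integral_of_le hs₀.2]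
      exact setIntegral_nonneg measurableSet_Ioc fun s _ => sq_nonneg _
    · linarith [ht.2, hs₀.1, ht.1]
  -- convert to ENNReal
  have hofReal : ENNReal.ofReal (∫ s in Set.Ioc (0:ℝ) T, H s)
      = ∫⁻ s in Set.Ioc (0:ℝ) T, ENNReal.ofReal (H s) :=
    ofReal_integral_eq_lintegral_ofReal hHint (by filter_upwards with s using hHnn s)
  calc ENNReal.ofReal (‖v (t, x)‖ ^ 2) ≤ ENNReal.ofReal (T * ∫ s in Set.Ioc 0 T, H s) :=
        ENNReal.ofReal_le_ofReal hsum
    _ = ENNReal.ofReal T * ENNReal.ofReal (∫ s in Set.Ioc (0:ℝ) T, H s) :=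
        ENNReal.ofReal_mul (le_trans ht.1 ht.2)
    _ = ENNReal.ofReal T * ∫⁻ s in Set.Ioc (0:ℝ) T, ENNReal.ofReal (H s) := by rw [hofReal]
    _ = _ := by
        congr 1
        apply lintegral_congr
        intro s
        by_cases h : x + (t - s) • ω ∈ Ω
        · rw [hH, Set.indicator_of_mem (show s ∈ Ω' from h), Set.indicator_of_mem h]
        · rw [hH, Set.indicator_of_notMem (show s ∉ Ω' from h),
            Set.indicator_of_notMem h, ENNReal.ofReal_zero]

/-- Integrated transport Poincaré inequality: for scalar `v` C¹, vanishing on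
the lateral boundary and at `t = 0`, and `ε > 0` with `1 − Tε² > 0`,
`∫₀ᵀ∫_Ω |v|² ≤ (T/ε²)(1 − Tε²)⁻¹ ∫₀ᵀ∫_Ω |(∂_t − ω·∇_x)v|²`. -/
theorem stmt4 (n : ℕ) (T : ℝ) (hT : 0 < T)
    (Ω : Set (EuclideanSpace ℝ (Fin n))) (hΩo : IsOpen Ω)
    (hΩb : Bornology.IsBounded Ω)
    (ω : EuclideanSpace ℝ (Fin n)) (hω : ‖ω‖ = 1)
    (v : ℝ × EuclideanSpace ℝ (Fin n) → ℂ)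
    (hv : ContDiff ℝ 1 v)
    (hbd : ∀ t ∈ Set.Icc (0:ℝ) T, ∀ x ∈ frontier Ω, v (t, x) = 0)
    (hv0 : ∀ x, v (0, x) = 0)
    (hint1 : IntegrableOn (fun p => ‖v p‖ ^ 2) (Set.Icc (0:ℝ) T ×ˢ Ω) volume)
    (hint2 : IntegrableOn (fun p => ‖fderiv ℝ v p ((1:ℝ), -ω)‖ ^ 2)
      (Set.Icc (0:ℝ) T ×ˢ Ω) volume)
    (ε : ℝ) (hε : 0 < ε) (hsmall : 0 < 1 - T * ε ^ 2) :
    (∫ t in (0:ℝ)..T, ∫ x in Ω, ‖v (t, x)‖ ^ 2)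
      ≤ (T / ε ^ 2) * (1 - T * ε ^ 2)⁻¹ *
        ∫ t in (0:ℝ)..T, ∫ x in Ω, ‖fderiv ℝ v (t, x) ((1:ℝ), -ω)‖ ^ 2 := by
  have hT0 : (0:ℝ) ≤ T := hT.le
  have hΩm : MeasurableSet Ω := hΩo.measurableSet
  set S : Set (ℝ × EuclideanSpace ℝ (Fin n)) := Set.Ioc (0:ℝ) T ×ˢ Ω with hSdef
  have hSm : MeasurableSet S := measurableSet_Ioc.prod hΩm
  have hrestr : (volume : Measure (ℝ × EuclideanSpace ℝ (Fin n))).restrict S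
      = (volume.restrict (Set.Ioc (0:ℝ) T)).prod (volume.restrict Ω) := by
    rw [hSdef, Measure.prod_restrict, ← Measure.volume_eq_prod]
  -- integrands
  set Fv : ℝ × EuclideanSpace ℝ (Fin n) → ℝ := fun z => ‖v z‖ ^ 2 with hFv
  set Dv : ℝ × EuclideanSpace ℝ (Fin n) → ℝ :=
    fun z => ‖fderiv ℝ v z ((1:ℝ), -ω)‖ ^ 2 with hDv
  have hDvc : Continuous Dv :=
    (((hv.continuous_fderiv one_ne_zero).clm_apply continuous_const).norm.pow 2)
  have hint1' : IntegrableOn Fv S volume :=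
    hint1.mono_set (Set.prod_mono_left Set.Ioc_subset_Icc_self)
  have hint2' : IntegrableOn Dv S volume :=
    hint2.mono_set (Set.prod_mono_left Set.Ioc_subset_Icc_self)
  -- step A : iterated Bochner integral = integral over the product set
  have hA : ∀ F : ℝ × EuclideanSpace ℝ (Fin n) → ℝ, IntegrableOn F S volume →
      (∫ t in Set.Ioc (0:ℝ) T, ∫ x in Ω, F (t, x)) = ∫ z in S, F z := by
    intro F hF
    rw [hrestr]
    rw [IntegrableOn, hrestr] at hF
    exact MeasureTheory.integral_integral hF
  rw [intervalIntegral.integral_of_le hT0, intervalIntegral.integral_of_le hT0]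
  have hLA : (∫ t in Set.Ioc (0:ℝ) T, ∫ x in Ω, ‖v (t, x)‖ ^ 2) = ∫ z in S, Fv z :=
    hA Fv hint1'
  have hRA : (∫ t in Set.Ioc (0:ℝ) T, ∫ x in Ω, ‖fderiv ℝ v (t, x) ((1:ℝ), -ω)‖ ^ 2)
      = ∫ z in S, Dv z := hA Dv hint2'
  rw [hLA, hRA]
  set R : ℝ := ∫ z in S, Dv z with hR
  have hRnn : 0 ≤ R := setIntegral_nonneg hSm fun z _ => sq_nonneg _
  have hLnn : 0 ≤ ∫ z in S, Fv z := setIntegral_nonneg hSm fun z _ => sq_nonneg _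
  -- step B : Bochner ↔ lintegral
  have hLB : ENNReal.ofReal (∫ z in S, Fv z) = ∫⁻ z in S, ENNReal.ofReal (Fv z) :=
    ofReal_integral_eq_lintegral_ofReal hint1' (ae_of_all _ fun z => sq_nonneg _)
  have hRB : ENNReal.ofReal R = ∫⁻ z in S, ENNReal.ofReal (Dv z) :=
    ofReal_integral_eq_lintegral_ofReal hint2' (ae_of_all _ fun z => sq_nonneg _)
  -- the kernel
  set G : (ℝ × EuclideanSpace ℝ (Fin n)) → ℝ → ENNReal := fun z s =>
    Set.indicator Ω (fun y => ENNReal.ofReal (Dv (s, y))) (z.2 + (z.1 - s) • ω) with hG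
  have hGm : Measurable fun p : (ℝ × EuclideanSpace ℝ (Fin n)) × ℝ => G p.1 p.2 := by
    simp only [hG, Set.indicator_apply]
    have hψ : Continuous fun p : (ℝ × EuclideanSpace ℝ (Fin n)) × ℝ =>
        p.1.2 + (p.1.1 - p.2) • ω := by fun_prop
    refine Measurable.ite (measurableSet_preimage hψ.measurable hΩm) ?_ measurable_const
    exact (ENNReal.continuous_ofReal.comp (hDvc.comp ((continuous_snd.prodMk hψ)))).measurable
  -- pointwise bound
  have hkey : ∀ z ∈ S, ENNReal.ofReal (Fv z)
      ≤ ENNReal.ofReal T * ∫⁻ s in Set.Ioc (0:ℝ) T, G z s := by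
    rintro ⟨t, x⟩ ⟨ht, hx⟩
    exact transport_key hΩo hv hbd hv0 ⟨ht.1.le, ht.2⟩ hx
  have c1 : (∫⁻ z in S, ENNReal.ofReal (Fv z))
      ≤ ∫⁻ z in S, ENNReal.ofReal T * ∫⁻ s in Set.Ioc (0:ℝ) T, G z s := by
    refine lintegral_mono_ae ?_
    rw [ae_restrict_iff' hSm]
    exact ae_of_all _ hkey
  have c2 : (∫⁻ z in S, ENNReal.ofReal T * ∫⁻ s in Set.Ioc (0:ℝ) T, G z s)
      = ENNReal.ofReal T * ∫⁻ z in S, ∫⁻ s in Set.Ioc (0:ℝ) T, G z s :=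
    lintegral_const_mul' _ _ ENNReal.ofReal_ne_top
  have c3 : (∫⁻ z in S, ∫⁻ s in Set.Ioc (0:ℝ) T, G z s)
      = ∫⁻ s in Set.Ioc (0:ℝ) T, ∫⁻ z in S, G z s :=
    lintegral_lintegral_swap hGm.aemeasurable
  have c4 : ∀ s, (∫⁻ z in S, G z s)
      ≤ ENNReal.ofReal T * ∫⁻ y in Ω, ENNReal.ofReal (Dv (s, y)) := by
    intro s
    have hmeas_s : Measurable fun z : ℝ × EuclideanSpace ℝ (Fin n) => G z s :=
      hGm.comp (measurable_id.prodMk measurable_const)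
    have hsplit : (∫⁻ z in S, G z s)
        = ∫⁻ t in Set.Ioc (0:ℝ) T, ∫⁻ x in Ω, G (t, x) s := by
      rw [hrestr, lintegral_prod _ hmeas_s.aemeasurable]
    rw [hsplit]
    have hinner : ∀ t : ℝ, (∫⁻ x in Ω, G (t, x) s)
        ≤ ∫⁻ y in Ω, ENNReal.ofReal (Dv (s, y)) := by
      intro t
      calc (∫⁻ x in Ω, G (t, x) s) ≤ ∫⁻ x, G (t, x) s := setLIntegral_le_lintegral _ _
        _ = ∫⁻ x, (Ω.indicator fun y => ENNReal.ofReal (Dv (s, y))) (x + (t - s) • ω) := rfl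
        _ = ∫⁻ x, (Ω.indicator fun y => ENNReal.ofReal (Dv (s, y))) x :=
            lintegral_add_right_eq_self _ ((t - s) • ω)
        _ = ∫⁻ y in Ω, ENNReal.ofReal (Dv (s, y)) := lintegral_indicator hΩm _
    calc (∫⁻ t in Set.Ioc (0:ℝ) T, ∫⁻ x in Ω, G (t, x) s)
        ≤ ∫⁻ _ in Set.Ioc (0:ℝ) T, ∫⁻ y in Ω, ENNReal.ofReal (Dv (s, y)) :=
          lintegral_mono fun t => hinner t
      _ = (∫⁻ y in Ω, ENNReal.ofReal (Dv (s, y))) * volume (Set.Ioc (0:ℝ) T) :=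
          setLIntegral_const _ _
      _ = ENNReal.ofReal T * ∫⁻ y in Ω, ENNReal.ofReal (Dv (s, y)) := by
          rw [Real.volume_Ioc, sub_zero, mul_comm]
  have c5 : (∫⁻ s in Set.Ioc (0:ℝ) T, ∫⁻ z in S, G z s)
      ≤ ENNReal.ofReal T * ∫⁻ s in Set.Ioc (0:ℝ) T, ∫⁻ y in Ω, ENNReal.ofReal (Dv (s, y)) := by
    calc (∫⁻ s in Set.Ioc (0:ℝ) T, ∫⁻ z in S, G z s)
        ≤ ∫⁻ s in Set.Ioc (0:ℝ) T, ENNReal.ofReal T * ∫⁻ y in Ω, ENNReal.ofReal (Dv (s, y)) :=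
          lintegral_mono fun s => c4 s
      _ = _ := lintegral_const_mul' _ _ ENNReal.ofReal_ne_top
  have c6 : (∫⁻ s in Set.Ioc (0:ℝ) T, ∫⁻ y in Ω, ENNReal.ofReal (Dv (s, y)))
      = ∫⁻ z in S, ENNReal.ofReal (Dv z) := by
    have hm : AEMeasurable (fun z : ℝ × EuclideanSpace ℝ (Fin n) => ENNReal.ofReal (Dv z))
        ((volume.restrict (Set.Ioc (0:ℝ) T)).prod (volume.restrict Ω)) :=
      (ENNReal.continuous_ofReal.comp hDvc).measurable.aemeasurable
    rw [hrestr, lintegral_prod _ hm]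
  -- combine
  have hmain : ENNReal.ofReal (∫ z in S, Fv z)
      ≤ ENNReal.ofReal T * (ENNReal.ofReal T * ENNReal.ofReal R) := by
    rw [hLB, ← hRB] at *
    calc (∫⁻ z in S, ENNReal.ofReal (Fv z))
        ≤ ∫⁻ z in S, ENNReal.ofReal T * ∫⁻ s in Set.Ioc (0:ℝ) T, G z s := c1
      _ = ENNReal.ofReal T * ∫⁻ z in S, ∫⁻ s in Set.Ioc (0:ℝ) T, G z s := c2
      _ = ENNReal.ofReal T * ∫⁻ s in Set.Ioc (0:ℝ) T, ∫⁻ z in S, G z s := by rw [c3]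
      _ ≤ ENNReal.ofReal T * (ENNReal.ofReal T *
            ∫⁻ s in Set.Ioc (0:ℝ) T, ∫⁻ y in Ω, ENNReal.ofReal (Dv (s, y))) :=
          mul_le_mul_right c5 _
      _ = ENNReal.ofReal T * (ENNReal.ofReal T * ENNReal.ofReal R) := by rw [c6, hRB]
  have hfin : (∫ z in S, Fv z) ≤ T * (T * R) := by
    have h1 : ENNReal.ofReal T * (ENNReal.ofReal T * ENNReal.ofReal R)
        = ENNReal.ofReal (T * (T * R)) := by
      rw [ENNReal.ofReal_mul hT0, ENNReal.ofReal_mul hT0]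
    rw [h1] at hmain
    have := ENNReal.ofReal_le_ofReal_iff (by positivity : (0:ℝ) ≤ T * (T * R)) |>.mp hmain
    exact this
  -- compare constants
  have hconst : T * T ≤ (T / ε ^ 2) * (1 - T * ε ^ 2)⁻¹ := by
    rw [← div_eq_mul_inv, div_div, le_div_iff₀ (by positivity : 0 < ε ^ 2 * (1 - T * ε ^ 2))]
    nlinarith [mul_nonneg hT.le (sq_nonneg (2 * T * ε ^ 2 - 1)), hT.le]
  calc (∫ z in S, Fv z) ≤ T * (T * R) := hfin
    _ = (T * T) * R := by ring
    _ ≤ (T / ε ^ 2) * (1 - T * ε ^ 2)⁻¹ * R :=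
        mul_le_mul_of_nonneg_right hconst hRnn
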